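/- Let Ω^R be the set of pairs (B,A) with B ∈ GL(n,ℝ), B⁻¹A of rank m and canonical quasi-lower triangular, satisfying the affine restriction R vec([B A]) = u, where R ∈ ℝ^{r×n(n+m)} and u ∈ ℝ^r. Fix (B,A) ∈ Ω^R with C = B⁻¹A and P = [−C; I_m]. Then (B,A) is the unique element of Ω^R with B̃⁻¹Ã = B⁻¹A if and only if the stacked matrix M = [P' ⊗ I_n; R] has full column rank n(n+m). -/

import Mathlib

open Matrix Kronecker

/-- `C` is canonical quasi-lower triangular. -/
def QLT {n m : ℕ} (C : Matrix (Fin n) (Fin m) ℝ) : Prop :=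
  ∃ idx : Fin m → Fin n, StrictMono idx ∧
    ∀ j : Fin m, 0 < C (idx j) j ∧ ∀ i : Fin n, i < idx j → C i j = 0

/-- Column-stacking vectorization of an `n × c` matrix. -/
def vecM {n : ℕ} {c : Type*} (M : Matrix (Fin n) c ℝ) : c × Fin n → ℝ :=
  fun p => M p.2 p.1

lemma vecM_inj {n : ℕ} {c : Type*} {M N : Matrix (Fin n) c ℝ}
    (h : vecM M = vecM N) : M = N := by
  ext i j
  exact congrFun h (j, i)

lemma rank_eq_card_iff_inj {α β : Type*} [Fintype α] [Fintype β] [DecidableEq α]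
    (M : Matrix α β ℝ) :
    M.rank = Fintype.card β ↔ Function.Injective M.mulVec := by
  have h := LinearMap.finrank_range_add_finrank_ker M.mulVecLin
  rw [Module.finrank_fintype_fun_eq_card] at h
  constructor
  · intro hr
    rw [Matrix.rank] at hr
    have hker : Module.finrank ℝ (LinearMap.ker M.mulVecLin) = 0 := by omega
    have hbot : LinearMap.ker M.mulVecLin = ⊥ := Submodule.finrank_eq_zero.mp hker
    have hinj := LinearMap.ker_eq_bot.mp hbot
    intro x y hxy
    exact hinj (by simpa [Matrix.mulVecLin_apply] using hxy)
  · intro hinj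
    have hbot : LinearMap.ker M.mulVecLin = ⊥ := by
      apply LinearMap.ker_eq_bot.mpr
      intro x y hxy
      exact hinj (by simpa [Matrix.mulVecLin_apply] using hxy)
    rw [Matrix.rank, ← h, hbot]
    simp

lemma kron_mulVec_vecM {n m : ℕ} (P : Matrix (Fin n ⊕ Fin m) (Fin m) ℝ)
    (X : Matrix (Fin n) (Fin n ⊕ Fin m) ℝ) :
    (Pᵀ ⊗ₖ (1 : Matrix (Fin n) (Fin n) ℝ)).mulVec (vecM X) = vecM (X * P) := by
  funext p
  obtain ⟨j, i⟩ := p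
  simp only [Matrix.mulVec, dotProduct, vecM, Matrix.mul_apply, Fintype.sum_prod_type,
    Matrix.kroneckerMap_apply, Matrix.transpose_apply, Matrix.one_apply]
  rw [Finset.sum_comm]
  simp [mul_ite, ite_mul, mul_comm]

/-- Identification by affine restrictions in the simultaneous equations model:
with `C = B⁻¹A`, `P = [-C ; I_m]`, `(B,A)` is the unique parameter in `Ω^R`
(pairs satisfying (CF-SEM) and `R vec([B A]) = u`) observationally equivalent to it
(i.e. with `B̃⁻¹Ã = B⁻¹A`) iff `M = [P' ⊗ I_n ; R]` has full column rank `n(n+m)`. -/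
theorem stmt15 {n m r : ℕ}
    (R : Matrix (Fin r) ((Fin n ⊕ Fin m) × Fin n) ℝ) (u : Fin r → ℝ)
    (B : Matrix (Fin n) (Fin n) ℝ) (A : Matrix (Fin n) (Fin m) ℝ)
    (hB : IsUnit B) (hrank : (B⁻¹ * A).rank = m) (hq : QLT (B⁻¹ * A))
    (hres : R.mulVec (vecM (Matrix.fromCols B A)) = u) :
    (∀ (Bt : Matrix (Fin n) (Fin n) ℝ) (At : Matrix (Fin n) (Fin m) ℝ),
        IsUnit Bt → (Bt⁻¹ * At).rank = m → QLT (Bt⁻¹ * At) →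
        R.mulVec (vecM (Matrix.fromCols Bt At)) = u →
        Bt⁻¹ * At = B⁻¹ * A → Bt = B ∧ At = A) ↔
      (Matrix.fromRows
        (((Matrix.fromRows (-(B⁻¹ * A)) (1 : Matrix (Fin m) (Fin m) ℝ))ᵀ) ⊗ₖ
          (1 : Matrix (Fin n) (Fin n) ℝ)) R).rank = n * (n + m) := by
  set C := B⁻¹ * A with hC
  set P : Matrix (Fin n ⊕ Fin m) (Fin m) ℝ := Matrix.fromRows (-C) 1 with hP
  have hBdet : IsUnit B.det := (Matrix.isUnit_iff_isUnit_det B).mp hB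
  have hBC : B * C = A := by
    rw [hC, ← Matrix.mul_assoc, Matrix.mul_nonsing_inv B hBdet, Matrix.one_mul]
  have hcard : Fintype.card ((Fin n ⊕ Fin m) × Fin n) = n * (n + m) := by
    simp [Fintype.card_prod, Fintype.card_sum, mul_comm]
  rw [← hcard, rank_eq_card_iff_inj]
  constructor
  · -- uniqueness → injective
    intro huniq
    -- enough: trivial kernel
    suffices hker : ∀ ξ, (Matrix.fromRows (Pᵀ ⊗ₖ (1 : Matrix (Fin n) (Fin n) ℝ)) R).mulVec ξ = 0
        → ξ = 0 by
      intro x y hxy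
      have hz : (Matrix.fromRows (Pᵀ ⊗ₖ (1 : Matrix (Fin n) (Fin n) ℝ)) R).mulVec (x - y) = 0 := by
        rw [Matrix.mulVec_sub, hxy, sub_self]
      exact sub_eq_zero.mp (hker _ hz)
    intro ξ hξ
    set D : Matrix (Fin n) (Fin n) ℝ := Matrix.of fun i k => ξ (Sum.inl k, i) with hD
    set E : Matrix (Fin n) (Fin m) ℝ := Matrix.of fun i k => ξ (Sum.inr k, i) with hE
    have hξX : ξ = vecM (Matrix.fromCols D E) := by
      funext p
      obtain ⟨k, i⟩ := p
      cases k <;> rfl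
    rw [hξX, Matrix.fromRows_mulVec] at hξ
    have h1 : (Pᵀ ⊗ₖ (1 : Matrix (Fin n) (Fin n) ℝ)).mulVec (vecM (Matrix.fromCols D E)) = 0 := by
      funext p; exact congrFun hξ (Sum.inl p)
    have h2 : R.mulVec (vecM (Matrix.fromCols D E)) = 0 := by
      funext p; exact congrFun hξ (Sum.inr p)
    rw [kron_mulVec_vecM] at h1
    have hXP : Matrix.fromCols D E * P = 0 := by
      apply vecM_inj
      rw [h1]; funext p; simp [vecM]
    rw [hP, Matrix.fromCols_mul_fromRows, Matrix.mul_neg, Matrix.mul_one] at hXP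
    have hEDC : E = D * C := by
      have := hXP
      rw [neg_add_eq_zero] at this
      exact this.symm
    -- find c ≠ 0 with B + c • D invertible
    have hcont : Continuous fun c : ℝ => (B + c • D).det :=
      Continuous.matrix_det (continuous_const.add (continuous_id.smul continuous_const))
    have h0 : (fun c : ℝ => (B + c • D).det) 0 ≠ 0 := by
      simpa using hBdet.ne_zero
    have hev : ∀ᶠ c in nhds (0 : ℝ), (B + c • D).det ≠ 0 :=
      hcont.continuousAt.eventually_ne h0
    have hev' : ∀ᶠ c in nhdsWithin (0 : ℝ) {(0 : ℝ)}ᶜ,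
        c ∈ ({(0 : ℝ)}ᶜ : Set ℝ) ∧ (B + c • D).det ≠ 0 :=
      eventually_mem_nhdsWithin.and (eventually_nhdsWithin_of_eventually_nhds hev)
    obtain ⟨c, hc0, hcdet⟩ := hev'.exists
    have hc0 : c ≠ 0 := hc0
    have hBtdet : IsUnit (B + c • D).det := isUnit_iff_ne_zero.mpr hcdet
    set Bt := B + c • D with hBt
    have hBtU : IsUnit Bt := (Matrix.isUnit_iff_isUnit_det Bt).mpr hBtdet
    have hBtinv : Bt⁻¹ * (Bt * C) = C := by
      rw [← Matrix.mul_assoc, Matrix.nonsing_inv_mul Bt hBtdet, Matrix.one_mul]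
    have hvec : vecM (Matrix.fromCols Bt (Bt * C)) =
        vecM (Matrix.fromCols B A) + c • vecM (Matrix.fromCols D E) := by
      funext p
      obtain ⟨k, i⟩ := p
      cases k with
      | inl k =>
          simp [vecM, Matrix.fromCols, hBt]
      | inr k =>
          have : (Bt * C) i k = A i k + c * E i k := by
            rw [hBt, Matrix.add_mul, Matrix.smul_mul, hBC, hEDC]
            simp
          simp [vecM, Matrix.fromCols, this]
    have hresBt : R.mulVec (vecM (Matrix.fromCols Bt (Bt * C))) = u := by
      rw [hvec, Matrix.mulVec_add, Matrix.mulVec_smul, h2, hres]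
      simp
    have := huniq Bt (Bt * C) hBtU (by rw [hBtinv]; exact hrank)
      (by rw [hBtinv]; exact hq) hresBt hBtinv
    have hDz : D = 0 := by
      have hBtB : B + c • D = B := this.1
      have : c • D = 0 := by
        have := congrArg (fun X => X - B) hBtB
        simpa [add_sub_cancel_left] using this
      rcases smul_eq_zero.mp this with h | h
      · exact absurd h hc0
      · exact h
    have hEz : E = 0 := by rw [hEDC, hDz, Matrix.zero_mul]
    rw [hξX, hDz, hEz]
    funext p
    obtain ⟨k, i⟩ := p
    cases k <;> simp [vecM, Matrix.fromCols]
  · -- injective → uniqueness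
    intro hinj Bt At hBtU hrank' hq' hres' hCeq
    have hBtdet : IsUnit Bt.det := (Matrix.isUnit_iff_isUnit_det Bt).mp hBtU
    have hAt : Bt * C = At := by
      rw [← hCeq, ← Matrix.mul_assoc, Matrix.mul_nonsing_inv Bt hBtdet, Matrix.one_mul]
    have key : ∀ (X : Matrix (Fin n) (Fin n) ℝ) (Y : Matrix (Fin n) (Fin m) ℝ),
        X * C = Y →
        (Matrix.fromRows (Pᵀ ⊗ₖ (1 : Matrix (Fin n) (Fin n) ℝ)) R).mulVec
          (vecM (Matrix.fromCols X Y)) =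
        Sum.elim (0 : Fin m × Fin n → ℝ) (R.mulVec (vecM (Matrix.fromCols X Y))) := by
      intro X Y hXY
      rw [Matrix.fromRows_mulVec, kron_mulVec_vecM]
      rw [hP, Matrix.fromCols_mul_fromRows, Matrix.mul_neg, Matrix.mul_one, ← hXY,
        neg_add_cancel]
      funext p; rfl
    have heq : (Matrix.fromRows (Pᵀ ⊗ₖ (1 : Matrix (Fin n) (Fin n) ℝ)) R).mulVec
          (vecM (Matrix.fromCols Bt At)) =
        (Matrix.fromRows (Pᵀ ⊗ₖ (1 : Matrix (Fin n) (Fin n) ℝ)) R).mulVec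
          (vecM (Matrix.fromCols B A)) := by
      rw [key Bt At hAt, key B A hBC, hres, hres']
    have hXY := vecM_inj (hinj heq)
    constructor
    · ext i j; exact congrFun (congrFun hXY i) (Sum.inl j)
    · ext i j; exact congrFun (congrFun hXY i) (Sum.inr j)
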